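/- Let F be a totally real number field, let d, m, r be positive integers, let Q be a quadratic form on F^r with coefficients in F that is totally positive definite (positive definite under every embedding F → ℝ), and let L be a finitely generated O_F-submodule of F^r that spans F^r over F and satisfies Q(v) ∈ O_F for all v ∈ L. Fix an algebraic closure F̄ of F. Then the set of intermediate fields K with F ⊆ K ⊆ F̄ such that K is a totally real number field of degree d over ℚ and such that for every α ∈ O_K⁺ there exists a vector w in the O_K-span of L inside K^r with Q(w) = m·α, is finite. -/

import Mathlib

open NumberField

/-- A number field is totally real if every complex embedding has image contained in `ℝ`. -/
def IsTotallyRealField (K : Type) [Field K] : Prop :=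
  ∀ σ : K →+* ℂ, ∀ x : K, (σ x).im = 0

/-- An element of a field is totally positive if it is positive under every real embedding. -/
def TotallyPositive {K : Type} [Field K] (x : K) : Prop :=
  ∀ σ : K →+* ℝ, 0 < σ x

/-- The value at `v` of the quadratic form `∑_{i ≤ j} a i j * x i * x j`. -/
def quadEval {R : Type} [CommRing R] {r : ℕ} (a : Fin r → Fin r → R) (v : Fin r → R) : R :=
  ∑ p ∈ Finset.univ.filter (fun p : Fin r × Fin r => p.1 ≤ p.2), a p.1 p.2 * v p.1 * v p.2

section Aux

lemma quadEval_map {R S : Type} [CommRing R] [CommRing S] (f : R →+* S) {r : ℕ}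
    (a : Fin r → Fin r → R) (v : Fin r → R) :
    f (quadEval a v) = quadEval (fun i j => f (a i j)) (fun i => f (v i)) := by
  simp [quadEval, map_sum, map_mul]

lemma quadEval_smul {R : Type} [CommRing R] {r : ℕ} (a : Fin r → Fin r → R) (c : R)
    (v : Fin r → R) : quadEval a (fun i => c * v i) = c ^ 2 * quadEval a v := by
  simp only [quadEval, Finset.mul_sum]
  exact Finset.sum_congr rfl fun p _ => by ring

lemma exists_nat_mul_integral {E : Type} [Field E] [CharZero E] {x : E}
    (hx : IsIntegral ℚ x) : ∃ n : ℕ, 0 < n ∧ IsIntegral ℤ ((n : E) * x) := by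
  have halg : IsAlgebraic ℤ x := by
    rw [IsFractionRing.isAlgebraic_iff ℤ ℚ E]; exact hx.isAlgebraic
  obtain ⟨w, y, hy, hyx⟩ : ∃ w : integralClosure ℤ E, ∃ y ≠ (0 : ℤ),
      algebraMap ℤ E y * x = w := by
    obtain ⟨y, hy, hint⟩ := halg.exists_integral_multiple
    exact ⟨⟨_, hint⟩, y, hy, (Algebra.smul_def _ _).symm⟩
  have hmap : algebraMap ℤ E y = ((y : ℤ) : E) := by simp [eq_intCast]
  refine ⟨y.natAbs, Int.natAbs_pos.mpr hy, ?_⟩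
  rcases Int.natAbs_eq y with h | h
  · have h3 : ((y.natAbs : ℕ) : E) = ((y : ℤ) : E) := by
      conv_rhs => rw [h]
      exact (Int.cast_natCast _).symm
    rw [h3, ← hmap, hyx]; exact w.2
  · have h4 : (y.natAbs : ℤ) = -y := by omega
    have h3 : ((y.natAbs : ℕ) : E) = ((-y : ℤ) : E) := by
      conv_rhs => rw [← h4]
      exact (Int.cast_natCast _).symm
    rw [h3, Int.cast_neg, ← hmap, neg_mul, hyx]; exact w.2.neg

lemma posdef_lower_bound {r : ℕ} (hr : 0 < r) (b : Fin r → Fin r → ℝ)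
    (hb : ∀ v : Fin r → ℝ, v ≠ 0 → 0 < quadEval b v) :
    ∃ ε : ℝ, 0 < ε ∧ ∀ v : Fin r → ℝ, ε * ∑ i, v i ^ 2 ≤ quadEval b v := by
  have hcont : Continuous (fun v : Fin r → ℝ => quadEval b v) := by
    unfold quadEval
    exact continuous_finset_sum _ fun p _ =>
      (continuous_const.mul (continuous_apply p.1)).mul (continuous_apply p.2)
  have hsum_cont : Continuous (fun v : Fin r → ℝ => ∑ i, v i ^ 2) :=
    continuous_finset_sum _ fun i _ => (continuous_apply i).pow 2
  set S : Set (Fin r → ℝ) := {v | ∑ i, v i ^ 2 = 1} with hSdef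
  have hS_closed : IsClosed S := isClosed_eq hsum_cont continuous_const
  have hS_bdd : Bornology.IsBounded S := by
    apply (Metric.isBounded_closedBall (x := (0 : Fin r → ℝ)) (r := 1)).subset
    intro v hv
    rw [Metric.mem_closedBall, dist_zero_right]
    rw [pi_norm_le_iff_of_nonneg zero_le_one]
    intro i
    have h1 : v i ^ 2 ≤ 1 := by
      rw [← hv]
      exact Finset.single_le_sum (f := fun j => v j ^ 2) (fun j _ => sq_nonneg _)
        (Finset.mem_univ i)
    simpa [Real.norm_eq_abs] using (sq_le_one_iff_abs_le_one (v i)).mp h1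
  have hS_cpt : IsCompact S := Metric.isCompact_of_isClosed_isBounded hS_closed hS_bdd
  have hne : S.Nonempty := by
    refine ⟨Pi.single ⟨0, hr⟩ 1, ?_⟩
    simp only [hSdef, Set.mem_setOf_eq, Pi.single_apply]
    rw [Finset.sum_eq_single ⟨0, hr⟩]
    · simp
    · intro j _ hj; simp [hj]
    · simp
  obtain ⟨v0, hv0S, hv0min⟩ := hS_cpt.exists_isMinOn hne hcont.continuousOn
  have hv0ne : v0 ≠ 0 := by
    intro h
    rw [h] at hv0S
    simp only [hSdef, Set.mem_setOf_eq, Pi.zero_apply] at hv0S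
    norm_num at hv0S
  refine ⟨quadEval b v0, hb v0 hv0ne, fun v => ?_⟩
  by_cases hv : v = 0
  · subst hv
    simp [quadEval]
  · have hsum_pos : 0 < ∑ i, v i ^ 2 := by
      obtain ⟨i, hi⟩ : ∃ i, v i ≠ 0 := by
        by_contra hc
        push_neg at hc
        exact hv (funext hc)
      exact Finset.sum_pos' (fun j _ => sq_nonneg _)
        ⟨i, Finset.mem_univ i, by positivity⟩
    set s := Real.sqrt (∑ i, v i ^ 2) with hs
    have hs_pos : 0 < s := Real.sqrt_pos.mpr hsum_pos
    have hs_sq : s ^ 2 = ∑ i, v i ^ 2 := Real.sq_sqrt hsum_pos.le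
    have hu : (fun i => s⁻¹ * v i) ∈ S := by
      simp only [hSdef, Set.mem_setOf_eq]
      have h2 : ∑ i, (s⁻¹ * v i) ^ 2 = s⁻¹ ^ 2 * ∑ i, v i ^ 2 := by
        rw [Finset.mul_sum]
        exact Finset.sum_congr rfl fun i _ => by ring
      rw [h2, ← hs_sq]
      field_simp
    have hmin := hv0min hu
    have hq : quadEval b (fun i => s⁻¹ * v i) = s⁻¹ ^ 2 * quadEval b v :=
      quadEval_smul b s⁻¹ v
    simp only [IsMinOn, IsMinFilter] at hmin
    have h3 : quadEval b v0 ≤ s⁻¹ ^ 2 * quadEval b v := hq ▸ hmin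
    have h4 : s ^ 2 * quadEval b v0 ≤ quadEval b v := by
      have := mul_le_mul_of_nonneg_left h3 (sq_nonneg s)
      calc s ^ 2 * quadEval b v0 ≤ s ^ 2 * (s⁻¹ ^ 2 * quadEval b v) := this
        _ = quadEval b v := by field_simp
    calc quadEval b v0 * ∑ i, v i ^ 2 = s ^ 2 * quadEval b v0 := by rw [hs_sq]; ring
      _ ≤ quadEval b v := h4

open Polynomial in
lemma northcott (E : Type) [Field E] [CharZero E] (d : ℕ) (B : ℝ) :
    {x : E | IsIntegral ℤ x ∧ (minpoly ℚ x).natDegree ≤ d ∧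
      ∀ z ∈ (minpoly ℚ x).aroots ℂ, ‖z‖ ≤ B}.Finite := by
  classical
  let C := Nat.ceil (max B 1 ^ d * d.choose (d / 2))
  have hfin := Polynomial.bUnion_roots_finite (algebraMap ℤ E) d
    (Set.finite_Icc (-(C : ℤ)) C)
  refine hfin.subset fun x hx => ?_
  simp_rw [Set.mem_iUnion]
  have h_map_ℚ_minpoly := minpoly.isIntegrallyClosed_eq_field_fractions' ℚ hx.1
  refine ⟨_, ⟨?_, fun i => ?_⟩,
    Polynomial.mem_rootSet.2 ⟨minpoly.ne_zero hx.1, minpoly.aeval ℤ x⟩⟩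
  · rw [← (minpoly.monic hx.1).natDegree_map (algebraMap ℤ ℚ), ← h_map_ℚ_minpoly]
    exact hx.2.1
  · rw [Set.mem_Icc, ← abs_le, ← @Int.cast_le ℝ]
    have hint : IsIntegral ℚ x := hx.1.tower_top
    have hbdd : ‖(minpoly ℚ x).coeff i‖ ≤ max B 1 ^ d * d.choose (d / 2) := by
      rw [← norm_algebraMap' ℂ, ← Polynomial.coeff_map (algebraMap ℚ ℂ)]
      exact Polynomial.coeff_bdd_of_roots_le _ (minpoly.monic hint)
        (IsAlgClosed.splits _) hx.2.1 (fun z hz => hx.2.2 z hz) i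
    refine (Eq.trans_le ?_ hbdd).trans (Nat.le_ceil _)
    rw [h_map_ℚ_minpoly, Polynomial.coeff_map, eq_intCast, Int.norm_cast_rat,
      Int.norm_eq_abs, Int.cast_abs]

/-- Turn a complex embedding with real values into a real embedding. -/
def realify {K : Type} [Field K] (τ : K →+* ℂ) (h : ∀ x, (τ x).im = 0) : K →+* ℝ where
  toFun x := (τ x).re
  map_one' := by simp
  map_zero' := by simp
  map_add' x y := by simp
  map_mul' x y := by simp [Complex.mul_re, h x, h y]

lemma realify_norm {K : Type} [Field K] (τ : K →+* ℂ) (h : ∀ x, (τ x).im = 0) (x : K) :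
    ‖τ x‖ = |realify τ h x| := by
  have h1 : τ x = (((τ x).re : ℝ) : ℂ) := Complex.ext rfl (by simp [h x])
  rw [h1]
  simp [realify, Complex.norm_real]

end Aux

set_option maxHeartbeats 1000000 in
set_option synthInstance.maxHeartbeats 1000000 in
/-- Let `F` be totally real, `Q` a totally positive definite quadratic form on `F^r`, and
`L ⊆ F^r` a finitely generated `𝓞 F`-submodule spanning `F^r` with `Q(L) ⊆ 𝓞 F`. Then there
are only finitely many intermediate fields `F ⊆ K ⊆ F̄` that are totally real number fields of
degree `d` over `ℚ` such that the `𝓞 K`-span of `L` represents all of `m·𝓞 K⁺` under `Q`. -/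
theorem finitely_many_lifting_fields (F : Type) [Field F] [NumberField F]
    (hF : IsTotallyRealField F) (d m r : ℕ) (hd : 0 < d) (hm : 0 < m) (hr : 0 < r)
    (a : Fin r → Fin r → F)
    (hQ : ∀ σ : F →+* ℝ, ∀ v : Fin r → ℝ, v ≠ 0 → 0 < quadEval (fun i j => σ (a i j)) v)
    (L : Submodule (𝓞 F) (Fin r → F)) (hLfg : L.FG)
    (hLspan : Submodule.span F (L : Set (Fin r → F)) = ⊤)
    (hLint : ∀ v ∈ L, IsIntegral ℤ (quadEval a v)) :
    {K : IntermediateField F (AlgebraicClosure F) |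
      FiniteDimensional ℚ K ∧ Module.finrank ℚ K = d ∧ IsTotallyRealField K ∧
      ∀ α : 𝓞 K, TotallyPositive (α : K) →
        ∃ w ∈ Submodule.span (𝓞 K)
            ((fun v : Fin r → F => fun i => algebraMap F K (v i)) '' (L : Set (Fin r → F))),
          quadEval (fun i j => algebraMap F K (a i j)) w = (m : K) * (α : K)}.Finite := by
  classical
  -- the uniform lower bound for the quadratic form
  obtain ⟨ε, hε0, hεQ⟩ : ∃ ε : ℝ, 0 < ε ∧ ∀ (σ₀ : F →+* ℝ) (v : Fin r → ℝ),
      ε * ∑ i, v i ^ 2 ≤ quadEval (fun i j => σ₀ (a i j)) v := by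
    by_cases hne : Nonempty (F →+* ℝ)
    · have hch : ∀ σ₀ : F →+* ℝ, ∃ e : ℝ, 0 < e ∧
          ∀ v, e * ∑ i, v i ^ 2 ≤ quadEval (fun i j => σ₀ (a i j)) v :=
        fun σ₀ => posdef_lower_bound hr _ (fun v hv => hQ σ₀ v hv)
      choose ef hef0 hef using hch
      haveI := hne
      refine ⟨Finset.univ.inf' Finset.univ_nonempty ef, ?_, ?_⟩
      · rw [Finset.lt_inf'_iff]; exact fun σ₀ _ => hef0 σ₀
      · intro σ₀ v
        refine le_trans (mul_le_mul_of_nonneg_right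
          (Finset.inf'_le _ (Finset.mem_univ σ₀)) ?_) (hef σ₀ v)
        positivity
    · exact ⟨1, one_pos, fun σ₀ => absurd ⟨σ₀⟩ hne⟩
  -- a common denominator for the generators of L
  obtain ⟨D, hD0, hDL⟩ : ∃ D : ℕ, 0 < D ∧ ∀ v ∈ L, ∀ i, IsIntegral ℤ ((D : F) * v i) := by
    obtain ⟨T, hT⟩ := hLfg
    have hden : ∀ x : F, ∃ k : ℕ, 0 < k ∧ IsIntegral ℤ ((k : F) * x) :=
      fun x => exists_nat_mul_integral (IsIntegral.of_finite ℚ x)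
    choose kf hkf0 hkf using hden
    refine ⟨∏ t ∈ T, ∏ i : Fin r, kf (t i),
      Finset.prod_pos fun t _ => Finset.prod_pos fun i _ => hkf0 _, ?_⟩
    set D : ℕ := ∏ t ∈ T, ∏ i : Fin r, kf (t i) with hDdef
    have hDgen : ∀ t ∈ T, ∀ i : Fin r, IsIntegral ℤ ((D : F) * t i) := by
      intro t ht i
      have h1 : kf (t i) ∣ ∏ j : Fin r, kf (t j) :=
        Finset.dvd_prod_of_mem _ (Finset.mem_univ i)
      have h2 : (∏ j : Fin r, kf (t j)) ∣ D :=
        Finset.dvd_prod_of_mem (fun t => ∏ j : Fin r, kf (t j)) ht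
      obtain ⟨c, hc⟩ := h1.trans h2
      have h3 : (D : F) * t i = (c : F) * ((kf (t i) : F) * t i) := by
        rw [hc]; push_cast; ring
      rw [h3]
      have hcInt : IsIntegral ℤ ((c : ℕ) : F) := by
        have h5 : ((c : ℕ) : F) = algebraMap ℤ F (c : ℤ) := by
          rw [eq_intCast, Int.cast_natCast]
        rw [h5]
        exact isIntegral_algebraMap
      exact hcInt.mul (hkf _)
    intro v hv i
    rw [← hT] at hv
    induction hv using Submodule.span_induction with
    | mem z hz => exact hDgen z hz i
    | zero => simpa using isIntegral_zero
    | add p q hp hq ihp ihq =>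
        have : (D : F) * (p + q) i = (D : F) * p i + (D : F) * q i := by
          simp [mul_add]
        rw [this]; exact ihp.add ihq
    | smul c p hp ihp =>
        have : (D : F) * (c • p) i = algebraMap (𝓞 F) F c * ((D : F) * p i) := by
          rw [Pi.smul_apply, Algebra.smul_def]; ring
        rw [this]
        exact (RingOfIntegers.isIntegral_coe c).mul ihp
  -- constants
  set C : ℝ := (D : ℝ) * Real.sqrt (3 * m / ε) with hC
  have hC0 : 0 ≤ C := by positivity
  set B : ℝ := (C + 1) ^ 2 + 1 with hB
  have hB1 : 1 ≤ B := by nlinarith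
  -- the Northcott set
  set SN : Set (AlgebraicClosure F) := {x | IsIntegral ℤ x ∧ (minpoly ℚ x).natDegree ≤ d ∧
      ∀ z ∈ (minpoly ℚ x).aroots ℂ, ‖z‖ ≤ B} with hSN
  have hSNfin : SN.Finite := northcott _ d B
  -- main step : each field in the set is generated by a subset of SN
  have key : ∀ K ∈ {K : IntermediateField F (AlgebraicClosure F) |
      FiniteDimensional ℚ K ∧ Module.finrank ℚ K = d ∧ IsTotallyRealField K ∧
      ∀ α : 𝓞 K, TotallyPositive (α : K) →
        ∃ w ∈ Submodule.span (𝓞 K)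
            ((fun v : Fin r → F => fun i => algebraMap F K (v i)) '' (L : Set (Fin r → F))),
          quadEval (fun i j => algebraMap F K (a i j)) w = (m : K) * (α : K)},
      ∃ s ⊆ SN, K = IntermediateField.adjoin F s := by
    intro K hK
    obtain ⟨hfin, hdeg, hreal, hrep⟩ := hK
    haveI : FiniteDimensional ℚ K := hfin
    haveI : CharZero K := (algebraMap K (AlgebraicClosure F)).charZero
    haveI : NumberField K := ⟨⟩
    haveI : IsScalarTower ℚ F K := IsScalarTower.of_algebraMap_eq' (Subsingleton.elim _ _)
    haveI : IsScalarTower ℚ K (AlgebraicClosure F) :=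
      IsScalarTower.of_algebraMap_eq' (Subsingleton.elim _ _)
    haveI : FiniteDimensional F K := FiniteDimensional.right ℚ F K
    set G : ℕ → Set K := fun n =>
      {x : K | IsIntegral ℤ x ∧ ∀ σ : K →+* ℝ, |σ x| ≤ (n : ℝ)} with hG
    set A' : ℕ → IntermediateField F (AlgebraicClosure F) := fun n =>
      IntermediateField.adjoin F ((fun x : K => (x : AlgebraicClosure F)) '' G n) with hA'
    have hA'leK : ∀ n, A' n ≤ K := by
      intro n
      rw [hA', IntermediateField.adjoin_le_iff]
      rintro _ ⟨x, _, rfl⟩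
      exact x.2
    have hGmono : ∀ {n₁ n₂ : ℕ}, n₁ ≤ n₂ → G n₁ ⊆ G n₂ := by
      intro n₁ n₂ h x hx
      exact ⟨hx.1, fun σ => le_trans (hx.2 σ) (by exact_mod_cast h)⟩
    have hA'mono : ∀ {n₁ n₂ : ℕ}, n₁ ≤ n₂ → A' n₁ ≤ A' n₂ := by
      intro n₁ n₂ h
      exact IntermediateField.adjoin.mono F _ _ (Set.image_mono (hGmono h))
    -- every element of K, suitably scaled, lies in some A' n
    have helt : ∀ t : K, ∃ n : ℕ, (t : AlgebraicClosure F) ∈ A' n := by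
      intro t
      obtain ⟨k, hk0, hkint⟩ := exists_nat_mul_integral (IsIntegral.of_finite ℚ t)
      set n₁ := Finset.univ.sup (fun σ : K →+* ℝ => ⌈|σ ((k : K) * t)|⌉₊) with hn₁
      have hmem : (k : K) * t ∈ G n₁ := by
        refine ⟨hkint, fun σ => le_trans (Nat.le_ceil _) ?_⟩
        have := Finset.le_sup (f := fun σ : K →+* ℝ => ⌈|σ ((k : K) * t)|⌉₊)
          (Finset.mem_univ σ)
        exact_mod_cast this
      have h1 : (((k : K) * t : K) : AlgebraicClosure F) ∈ A' n₁ :=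
        IntermediateField.subset_adjoin F _ ⟨_, hmem, rfl⟩
      have hkE : ((k : ℕ) : AlgebraicClosure F) ≠ 0 := Nat.cast_ne_zero.mpr hk0.ne'
      refine ⟨n₁, ?_⟩
      have heq : (t : AlgebraicClosure F)
          = ((k : ℕ) : AlgebraicClosure F)⁻¹ * (((k : K) * t : K) : AlgebraicClosure F) := by
        push_cast
        field_simp
      rw [heq]
      exact mul_mem (inv_mem (natCast_mem _ _)) h1
    -- K is contained in some A' n
    have hexists : ∃ n : ℕ, K ≤ A' n := by
      choose nf hnf using helt
      obtain ⟨s, hs⟩ := Module.finite_def.mp ‹Module.Finite F K›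
      refine ⟨s.sup nf, ?_⟩
      intro y hy
      have hy' : (⟨y, hy⟩ : K) ∈ (⊤ : Submodule F K) := trivial
      rw [← hs] at hy'
      have hgen : ∀ (x : K), x ∈ Submodule.span F (s : Set K) →
          (x : AlgebraicClosure F) ∈ A' (s.sup nf) := by
        intro x hx
        induction hx using Submodule.span_induction with
        | mem z hz => exact hA'mono (Finset.le_sup hz) (hnf z)
        | zero => simpa using zero_mem (A' (s.sup nf))
        | add p q hp hq ihp ihq =>
            have : ((p + q : K) : AlgebraicClosure F)
                = (p : AlgebraicClosure F) + (q : AlgebraicClosure F) := by push_cast; ring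
            rw [this]; exact add_mem ihp ihq
        | smul c p hp ihp =>
            have : ((c • p : K) : AlgebraicClosure F)
                = algebraMap F (AlgebraicClosure F) c * (p : AlgebraicClosure F) := by
              rw [Algebra.smul_def]
              push_cast
              rw [IsScalarTower.algebraMap_apply F K (AlgebraicClosure F)]
            rw [this]
            exact mul_mem (IntermediateField.algebraMap_mem _ _) ihp
      exact hgen ⟨y, hy⟩ hy'
    set X := Nat.find hexists with hX
    have hXK : K ≤ A' X := Nat.find_spec hexists
    -- the bootstrap step
    have hstep : 1 ≤ X → K ≤ A' ⌈C * Real.sqrt X⌉₊ := by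
      intro hX1
      refine le_trans hXK ?_
      refine IntermediateField.adjoin_le_iff.mpr ?_
      rintro _ ⟨x, hxG, rfl⟩
      set n' := ⌈C * Real.sqrt X⌉₊ with hn'
      have hαint : IsIntegral ℤ (x + ((X + 1 : ℕ) : K)) := by
        refine hxG.1.add ?_
        have h5 : (((X + 1 : ℕ)) : K) = algebraMap ℤ K ((X + 1 : ℕ) : ℤ) := by
          rw [eq_intCast, Int.cast_natCast]
        rw [h5]; exact isIntegral_algebraMap
      set α : 𝓞 K := ⟨x + ((X + 1 : ℕ) : K), hαint⟩ with hα
      have hαK : (α : K) = x + ((X + 1 : ℕ) : K) := rfl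
      have hαpos : TotallyPositive (α : K) := by
        intro σ
        rw [hαK, map_add, map_natCast]
        have h6 := (abs_le.mp (hxG.2 σ)).1
        push_cast
        linarith
      obtain ⟨w, hw, hQw⟩ := hrep α hαpos
      have hwint0 : ∀ w' ∈ Submodule.span (𝓞 K)
          ((fun v : Fin r → F => fun i => algebraMap F K (v i)) '' (L : Set (Fin r → F))),
          ∀ i, IsIntegral ℤ ((D : K) * w' i) := by
        intro w' hw'
        induction hw' using Submodule.span_induction with
        | mem z hz =>
            obtain ⟨v, hv, rfl⟩ := hz
            intro i
            have h1 : (D : K) * algebraMap F K (v i) = algebraMap F K ((D : F) * v i) := by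
              rw [map_mul, map_natCast]
            rw [h1]
            exact (hDL v hv i).map (algebraMap F K).toIntAlgHom
        | zero => intro i; simpa using isIntegral_zero
        | add p q hp hq ihp ihq =>
            intro i
            have h2 : (D : K) * (p + q) i = (D : K) * p i + (D : K) * q i := by
              simp [mul_add]
            rw [h2]; exact (ihp i).add (ihq i)
        | smul c p hp ihp =>
            intro i
            have h2 : (D : K) * (c • p) i = algebraMap (𝓞 K) K c * ((D : K) * p i) := by
              rw [Pi.smul_apply, Algebra.smul_def]; ring
            rw [h2]
            exact (RingOfIntegers.isIntegral_coe c).mul (ihp i)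
      have hwint := hwint0 w hw
      have hm1 : (1 : ℝ) ≤ (m : ℝ) := by exact_mod_cast hm
      have hX1' : (1 : ℝ) ≤ (X : ℝ) := by exact_mod_cast hX1
      have hwbd : ∀ (σ : K →+* ℝ) (i : Fin r), |σ ((D : K) * w i)| ≤ C * Real.sqrt X := by
        intro σ i
        have hq1 := congrArg σ hQw
        rw [quadEval_map σ, map_mul, map_natCast] at hq1
        have hb := hεQ (σ.comp (algebraMap F K)) (fun i => σ (w i))
        simp only [RingHom.coe_comp, Function.comp_apply] at hb
        rw [hq1] at hb
        have hσα : σ (α : K) ≤ 2 * (X : ℝ) + 1 := by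
          rw [hαK, map_add, map_natCast]
          have h6 := (abs_le.mp (hxG.2 σ)).2
          push_cast
          linarith
        have h6 : ε * ∑ j, (σ (w j)) ^ 2 ≤ 3 * (m : ℝ) * (X : ℝ) := by
          calc ε * ∑ j, (σ (w j)) ^ 2 ≤ (m : ℝ) * σ (α : K) := hb
            _ ≤ (m : ℝ) * (2 * (X : ℝ) + 1) :=
                mul_le_mul_of_nonneg_left hσα (by positivity)
            _ ≤ 3 * (m : ℝ) * (X : ℝ) := by nlinarith
        have h7 : (σ (w i)) ^ 2 ≤ (3 * (m : ℝ) / ε) * (X : ℝ) := by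
          have h8 : (σ (w i)) ^ 2 ≤ ∑ j, (σ (w j)) ^ 2 :=
            Finset.single_le_sum (f := fun j => (σ (w j)) ^ 2)
              (fun j _ => sq_nonneg _) (Finset.mem_univ i)
          rw [div_mul_eq_mul_div, le_div_iff₀ hε0]
          calc (σ (w i)) ^ 2 * ε ≤ (∑ j, (σ (w j)) ^ 2) * ε :=
                mul_le_mul_of_nonneg_right h8 hε0.le
            _ = ε * ∑ j, (σ (w j)) ^ 2 := by ring
            _ ≤ 3 * (m : ℝ) * (X : ℝ) := h6
        have h9 : |σ (w i)| ≤ Real.sqrt ((3 * (m : ℝ) / ε) * (X : ℝ)) := by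
          rw [← Real.sqrt_sq_eq_abs]
          exact Real.sqrt_le_sqrt h7
        have h10 : Real.sqrt ((3 * (m : ℝ) / ε) * (X : ℝ))
            = Real.sqrt (3 * (m : ℝ) / ε) * Real.sqrt (X : ℝ) :=
          Real.sqrt_mul (by positivity) _
        rw [map_mul, map_natCast, abs_mul, Nat.abs_cast]
        calc (D : ℝ) * |σ (w i)| ≤ (D : ℝ) * (Real.sqrt (3 * (m : ℝ) / ε) * Real.sqrt (X : ℝ)) := by
              refine mul_le_mul_of_nonneg_left ?_ (by positivity)
              rw [← h10]; exact h9
          _ = C * Real.sqrt (X : ℝ) := by rw [hC]; ring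
      have hwG : ∀ i, (D : K) * w i ∈ G n' := fun i =>
        ⟨hwint i, fun σ => (hwbd σ i).trans (Nat.le_ceil _)⟩
      have hwA : ∀ i, ((w i : K) : AlgebraicClosure F) ∈ A' n' := by
        intro i
        have h1 : (((D : K) * w i : K) : AlgebraicClosure F) ∈ A' n' :=
          IntermediateField.subset_adjoin F _ ⟨_, hwG i, rfl⟩
        have hDne : ((D : ℕ) : AlgebraicClosure F) ≠ 0 := Nat.cast_ne_zero.mpr hD0.ne'
        have heq2 : ((w i : K) : AlgebraicClosure F)
            = ((D : ℕ) : AlgebraicClosure F)⁻¹ * (((D : K) * w i : K) : AlgebraicClosure F) := by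
          push_cast
          field_simp
        rw [heq2]
        exact mul_mem (inv_mem (natCast_mem _ _)) h1
      have hQA : ((quadEval (fun i j => algebraMap F K (a i j)) w : K) : AlgebraicClosure F)
          ∈ A' n' := by
        have h1 := quadEval_map (algebraMap K (AlgebraicClosure F))
          (fun i j => algebraMap F K (a i j)) w
        rw [show ((quadEval (fun i j => algebraMap F K (a i j)) w : K) : AlgebraicClosure F)
            = algebraMap K (AlgebraicClosure F)
              (quadEval (fun i j => algebraMap F K (a i j)) w) from rfl, h1]
        have h2 : ∀ i j : Fin r,
            algebraMap K (AlgebraicClosure F) (algebraMap F K (a i j)) ∈ A' n' := by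
          intro i j
          rw [← IsScalarTower.algebraMap_apply F K (AlgebraicClosure F)]
          exact IntermediateField.algebraMap_mem _ _
        unfold quadEval
        refine sum_mem fun p hp => ?_
        exact mul_mem (mul_mem (h2 p.1 p.2) (hwA p.1)) (hwA p.2)
      have hαA : ((α : K) : AlgebraicClosure F) ∈ A' n' := by
        have hmne : ((m : ℕ) : AlgebraicClosure F) ≠ 0 := Nat.cast_ne_zero.mpr hm.ne'
        have h2 : ((α : K) : AlgebraicClosure F)
            = ((m : ℕ) : AlgebraicClosure F)⁻¹ *
              ((quadEval (fun i j => algebraMap F K (a i j)) w : K) : AlgebraicClosure F) := by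
          rw [hQw]
          push_cast
          field_simp
        rw [h2]
        exact mul_mem (inv_mem (natCast_mem _ _)) hQA
      have h3 : ((x : K) : AlgebraicClosure F)
          = ((α : K) : AlgebraicClosure F) - ((X + 1 : ℕ) : AlgebraicClosure F) := by
        rw [hαK]; push_cast; ring
      show ((x : K) : AlgebraicClosure F) ∈ A' n'
      rw [h3]
      exact sub_mem hαA (natCast_mem _ _)
    -- the bound on X
    have hXB : (X : ℝ) ≤ B := by
      by_contra hcon
      push_neg at hcon
      have hX1 : 1 ≤ X := by
        have h0 : (1 : ℝ) ≤ (X : ℝ) := le_of_lt (lt_of_le_of_lt hB1 hcon)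
        exact_mod_cast h0
      have hsX : Real.sqrt X * Real.sqrt X = (X : ℝ) :=
        Real.mul_self_sqrt (by positivity)
      have hs0 : 0 ≤ Real.sqrt X := Real.sqrt_nonneg _
      have hlt : C * Real.sqrt X + 1 < (X : ℝ) := by
        nlinarith [sq_nonneg (Real.sqrt X - (C + 1)), hsX, hs0, hC0, hcon, hB1]
      have hn'lt : ⌈C * Real.sqrt X⌉₊ < X := by
        have h2 : (⌈C * Real.sqrt X⌉₊ : ℝ) < (X : ℝ) :=
          lt_of_lt_of_le (Nat.ceil_lt_add_one (by positivity)) hlt.le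
        exact_mod_cast h2
      exact Nat.find_min hexists hn'lt (hstep hX1)
    -- conclusion
    refine ⟨(fun x : K => (x : AlgebraicClosure F)) '' G X, ?_, ?_⟩
    · rintro _ ⟨x, hx, rfl⟩
      have hmp : minpoly ℚ ((x : K) : AlgebraicClosure F) = minpoly ℚ x :=
        minpoly.algebraMap_eq (algebraMap K (AlgebraicClosure F)).injective x
      refine ⟨hx.1.map (algebraMap K (AlgebraicClosure F)).toIntAlgHom, ?_, ?_⟩
      · rw [hmp]
        calc (minpoly ℚ x).natDegree ≤ Module.finrank ℚ K := minpoly.natDegree_le x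
          _ = d := hdeg
      · intro z hz
        rw [hmp] at hz
        have hz' : z ∈ (minpoly ℚ x).rootSet ℂ := by
          rw [Polynomial.mem_rootSet]
          exact ⟨minpoly.ne_zero (IsIntegral.of_finite ℚ x), (Polynomial.mem_aroots.mp hz).2⟩
        rw [← NumberField.Embeddings.range_eval_eq_rootSet_minpoly K ℂ x] at hz'
        obtain ⟨φ, hφ⟩ := hz'
        rw [← hφ, realify_norm φ (hreal φ)]
        exact le_trans (hx.2 (realify φ (hreal φ))) hXB
    · exact le_antisymm hXK (hA'leK X)
  -- finish by Northcott
  apply Set.Finite.subset ((hSNfin.finite_subsets).image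
    (fun s : Set (AlgebraicClosure F) => IntermediateField.adjoin F s))
  intro K hK
  obtain ⟨s, hs, heq⟩ := key K hK
  exact ⟨s, hs, heq.symm⟩
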